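/- Inert combinatorial graph maps are closed under composition, active combinatorial graph maps are closed under composition, and a combinatorial graph map that is both inert and active is an isomorphism of graphs. -/

import Mathlib

/-- A graph: finite sets `V` of vertices and `A` of arcs (half-edges), a fixed-point
free involution `† = dag` on arcs, and an endpoint map `t : A → V ⊔ {∞}`
(we encode `V ⊔ {∞}` as `Option V` with `∞ = none`). -/
structure CGraph : Type 1 where
  V : Type
  A : Type
  [fintypeV : Fintype V]
  [fintypeA : Fintype A]
  dag : A → A
  dag_dag : ∀ a, dag (dag a) = a
  dag_ne : ∀ a, dag a ≠ a
  t : A → Option V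

attribute [instance] CGraph.fintypeV CGraph.fintypeA

namespace CGraph

/-- The generating relation on `V ⊔ A`: an arc touches its `†`-partner, and an arc
touches its endpoint (when the endpoint is a vertex). -/
inductive Touch (G : CGraph) : (G.V ⊕ G.A) → (G.V ⊕ G.A) → Prop
  | dag (a : G.A) : Touch G (Sum.inr a) (Sum.inr (G.dag a))
  | incid (a : G.A) (v : G.V) : G.t a = some v → Touch G (Sum.inr a) (Sum.inl v)

/-- A graph is connected if `V ⊔ A` is nonempty and the equivalence relation generated
by `Touch` has exactly one equivalence class. -/
def Connected (G : CGraph) : Prop :=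
  Nonempty (G.V ⊕ G.A) ∧ ∀ x y : G.V ⊕ G.A, Relation.EqvGen G.Touch x y

/-- The valence of a vertex: the number of arcs ending at it. -/
noncomputable def valence (G : CGraph) (v : G.V) : ℕ :=
  Nat.card {a : G.A // G.t a = some v}

/-- A vertex is bivalent if exactly two arcs end at it. -/
def Bivalent (G : CGraph) (v : G.V) : Prop := G.valence v = 2

/-- `x ∈ V ⊔ {∞}` is bivalent or `∞`. -/
def BivAt (G : CGraph) (x : Option G.V) : Prop :=
  x = none ∨ ∃ v, x = some v ∧ G.Bivalent v

/-- `IsPath G l s e`: the list of arcs `l = [a₁, …, aₙ]` is a path from `s` to `e`: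
`t(a₁†) = s`, `t(aᵢ) = t(aᵢ₊₁†)` for `i < n`, and `t(aₙ) = e`; the empty path is a
path from `s` to `e` exactly when `s = e`. -/
def IsPath (G : CGraph) : List G.A → Option G.V → Option G.V → Prop
  | [], s, e => s = e
  | a :: l, s, e => G.t (G.dag a) = s ∧ G.IsPath l (G.t a) e

/-- A path is bivalent if each of its intermediate vertices `t(aᵢ)`, `i < n`, is
bivalent or `∞`. -/
def IsBivalentPath (G : CGraph) (l : List G.A) (s e : Option G.V) : Prop :=
  G.IsPath l s e ∧
    ∀ (i : ℕ) (h : i + 1 < l.length), G.BivAt (G.t (l.get ⟨i, Nat.lt_of_succ_lt h⟩))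

/-- The underlying data of a combinatorial graph map `Γ → Λ`: a basepoint-preserving
map on vertices-with-∞ and a map on arcs in the opposite direction. -/
structure PreMap (G H : CGraph) : Type where
  fv : Option G.V → Option H.V
  fa : H.A → G.A

/-- `FiberList f a l`: the list `l` enumerates `f_a⁻¹(a)` (without repetitions) and is
a bivalent path in the target graph between the images of the endpoints of `a`
(oriented so that the identity map is a graph map). -/
def FiberList {G H : CGraph} (f : PreMap G H) (a : G.A) (l : List H.A) : Prop :=
  (∀ b : H.A, b ∈ l ↔ f.fa b = a) ∧ l.Nodup ∧
    H.IsBivalentPath l (f.fv (G.t (G.dag a))) (f.fv (G.t a))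

/-- `MidVertexOf H l w`: `w` occurs as an intermediate vertex of the path `l`. -/
def MidVertexOf (H : CGraph) (l : List H.A) (w : H.V) : Prop :=
  ∃ (i : ℕ) (h : i + 1 < l.length), H.t (l.get ⟨i, Nat.lt_of_succ_lt h⟩) = some w

/-- `OnFiberPath f w a`: the vertex `w` of the target occurs as an intermediate vertex
of the bivalent path enumerating `f_a⁻¹(a)`. -/
def OnFiberPath {G H : CGraph} (f : PreMap G H) (w : H.V) (a : G.A) : Prop :=
  ∃ l : List H.A, FiberList f a l ∧ MidVertexOf H l w

/-- The conditions for a pair `(f_v, f_a)` to be a combinatorial graph map: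
(1) `f_v(∞) = ∞`; (2) `f_a` commutes with `†`; (3) each `f_a⁻¹(a)` admits an ordering
making it a bivalent path between the images of the endpoints of `a`; (4) vertices
identified by `f_v` are joined by a path of arcs outside the image of `f_a`;
(5) each vertex of the target not in the image of `f_v` is bivalent and occurs as an
intermediate vertex of exactly one of the bivalent paths from (3) (where the paths of
an arc and of its `†`-partner are regarded as the same path). -/
def IsGraphMap {G H : CGraph} (f : PreMap G H) : Prop :=
  f.fv none = none ∧
  (∀ b : H.A, f.fa (H.dag b) = G.dag (f.fa b)) ∧
  (∀ a : G.A, ∃ l : List H.A, FiberList f a l) ∧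
  (∀ v v' : G.V, f.fv (some v) = f.fv (some v') → f.fv (some v) ≠ none →
    ∃ l : List G.A, (∀ c ∈ l, c ∉ Set.range f.fa) ∧ G.IsPath l (some v) (some v')) ∧
  (∀ w : H.V, (∀ v : G.V, f.fv (some v) ≠ some w) →
    H.Bivalent w ∧ ∃ a : G.A, OnFiberPath f w a ∧
      ∀ a' : G.A, OnFiberPath f w a' → a' = a ∨ a' = G.dag a)

/-- The identity pre-map. -/
def PreMap.id (G : CGraph) : PreMap G G := ⟨fun x => x, fun a => a⟩

/-- Composition of pre-maps: `f` first, then `g`. -/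
def PreMap.comp {G H K : CGraph} (f : PreMap G H) (g : PreMap H K) : PreMap G K :=
  ⟨g.fv ∘ f.fv, f.fa ∘ g.fa⟩

/-- A combinatorial graph map is inert if `f_v⁻¹(w)` has exactly one element for every
vertex `w` of the target, and `f_a⁻¹(a)` is empty only when `f_v(t(a)) = ∞`. -/
def IsInert {G H : CGraph} (f : PreMap G H) : Prop :=
  (∀ w : H.V, ∃! v : G.V, f.fv (some v) = some w) ∧
  (∀ a : G.A, (∀ b : H.A, f.fa b ≠ a) → f.fv (G.t a) = none)

/-- A combinatorial graph map is active if `f_v⁻¹(∞) = {∞}` and none of the bivalent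
paths `f_a⁻¹(a)` passes through `∞`. -/
def IsActive {G H : CGraph} (f : PreMap G H) : Prop :=
  (∀ x : Option G.V, f.fv x = none → x = none) ∧
  (∀ (a : G.A) (l : List H.A), FiberList f a l →
    ∀ (i : ℕ) (h : i + 1 < l.length), H.t (l.get ⟨i, Nat.lt_of_succ_lt h⟩) ≠ none)

/-- An isomorphism of graphs: a graph map with a two-sided inverse graph map. -/
def IsGraphIso {G H : CGraph} (f : PreMap G H) : Prop :=
  IsGraphMap f ∧ ∃ g : PreMap H G, IsGraphMap g ∧
    f.comp g = PreMap.id G ∧ g.comp f = PreMap.id H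

end CGraph

namespace CGraph

lemma isPath_last {G : CGraph} : ∀ (l : List G.A) {s e : Option G.V},
    G.IsPath l s e → ∀ (h : l ≠ []), G.t (l.getLast h) = e
  | [], _, _, _, h => absurd rfl h
  | [a], _, _, hp, _ => hp.2
  | a :: b :: l, s, e, hp, _ => by
      have := isPath_last (b :: l) hp.2 (by simp)
      simpa [List.getLast] using this

lemma isPath_head {G : CGraph} {a : G.A} {l : List G.A} {s e : Option G.V}
    (hp : G.IsPath (a :: l) s e) : G.t (G.dag a) = s := hp.1

lemma isPath_get_zero {G : CGraph} : ∀ (l : List G.A) {s e : Option G.V},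
    G.IsPath l s e → ∀ (h : 0 < l.length), G.t (G.dag (l.get ⟨0, h⟩)) = s
  | [], _, _, _, h => by simp at h
  | a :: l, _, _, hp, _ => hp.1

lemma isPath_consec {G : CGraph} : ∀ (l : List G.A) {s e : Option G.V},
    G.IsPath l s e → ∀ (i : ℕ) (h : i + 1 < l.length),
      G.t (l.get ⟨i, Nat.lt_of_succ_lt h⟩) = G.t (G.dag (l.get ⟨i+1, h⟩))
  | [], _, _, _, _, h => by simp at h
  | [a], _, _, _, _, h => by simp at h
  | a :: b :: l, s, e, hp, 0, h => hp.2.1.symm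
  | a :: b :: l, s, e, hp, (i+1), h => isPath_consec (b :: l) hp.2 i (by simpa using h)

lemma eqvGen_closed {G : CGraph} (S : Set (G.V ⊕ G.A))
    (hS : ∀ x y, G.Touch x y → (x ∈ S ↔ y ∈ S)) :
    ∀ x y, Relation.EqvGen G.Touch x y → (x ∈ S ↔ y ∈ S) := by
  intro x y h
  induction h with
  | rel _ _ h => exact hS _ _ h
  | refl => exact Iff.rfl
  | symm _ _ _ ih => exact ih.symm
  | trans _ _ _ _ _ ih1 ih2 => exact ih1.trans ih2

lemma card2_cases {α : Type*} (h : Nat.card α = 2) {x y : α} (hxy : x ≠ y) (z : α) :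
    z = x ∨ z = y := by
  rw [Nat.card_eq_two_iff] at h
  obtain ⟨a, b, hab, huniv⟩ := h
  have hmem : ∀ c : α, c = a ∨ c = b := by
    intro c
    have : c ∈ ({a, b} : Set α) := huniv ▸ Set.mem_univ c
    simpa using this
  rcases hmem x with hx | hx <;> rcases hmem y with hy | hy <;>
    rcases hmem z with hz | hz <;> subst_vars <;> tauto

end CGraph

theorem List.getLast_eq_get {α : Type*} (l : List α) (h : l ≠ []) :
    l.getLast h = l.get ⟨l.length - 1, by
      cases l with
      | nil => exact absurd rfl h
      | cons _ _ => simp⟩ := by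
  simp [List.getLast_eq_getElem]

namespace CGraph

lemma inert_comp {G H K : CGraph} (f : PreMap G H) (g : PreMap H K)
    (hf : IsGraphMap f) (hg : IsGraphMap g) (hif : IsInert f) (hig : IsInert g) :
    IsInert (f.comp g) := by
  constructor
  · intro w
    obtain ⟨u, hu, huu⟩ := hig.1 w
    obtain ⟨v, hv, hvv⟩ := hif.1 u
    refine ⟨v, ?_, ?_⟩
    · show g.fv (f.fv (some v)) = some w
      rw [hv, hu]
    · intro v' hv'
      have hv'' : g.fv (f.fv (some v')) = some w := hv'
      have h1 : f.fv (some v') ≠ none := by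
        intro h; rw [h, hg.1] at hv''; exact Option.some_ne_none _ hv''.symm
      obtain ⟨u', hu'⟩ := Option.ne_none_iff_exists'.mp h1
      rw [hu'] at hv''
      have := huu u' hv''
      exact hvv v' (show f.fv (some v') = some u by rw [hu', this])
  · intro a ha
    by_cases hfib : ∃ b : H.A, f.fa b = a
    · obtain ⟨b, hb⟩ := hfib
      obtain ⟨l, hl⟩ := hf.2.2.1 a
      have hbl : b ∈ l := (hl.1 b).2 hb
      have hne : l ≠ [] := List.ne_nil_of_mem hbl
      have hlast := isPath_last l hl.2.2.1 hne
      have hb' : f.fa (l.getLast hne) = a := (hl.1 _).1 (List.getLast_mem hne)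
      have hnotin : ∀ c : K.A, g.fa c ≠ l.getLast hne := by
        intro c hc
        exact ha c (by show f.fa (g.fa c) = a; rw [hc, hb'])
      have h2 := hig.2 _ hnotin
      show g.fv (f.fv (G.t a)) = none
      rw [← hlast]; exact h2
    · push_neg at hfib
      have := hif.2 a hfib
      show g.fv (f.fv (G.t a)) = none
      rw [this, hg.1]

lemma active_comp {G H K : CGraph} (f : PreMap G H) (g : PreMap H K)
    (hf : IsGraphMap f) (hg : IsGraphMap g) (haf : IsActive f) (hag : IsActive g) :
    IsActive (f.comp g) := by
  constructor
  · intro x hx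
    exact haf.1 x (hag.1 _ hx)
  · intro a l hl i hi hnone
    -- general: an element of a g-fiber list with t = none is its last element
    have lastOf : ∀ (c : H.A) (M : List K.A), FiberList g c M → ∀ b ∈ M, K.t b = none →
        ∀ (hne : M ≠ []), b = M.getLast hne := by
      intro c M hM b hbM hn hne
      obtain ⟨⟨j, hj⟩, hbj⟩ := List.mem_iff_get.mp hbM
      rcases Nat.lt_or_ge (j+1) M.length with h | h
      · exact absurd (hbj ▸ hag.2 c M hM j h) (by simp [hn])
      · have hjlen : j = M.length - 1 := by omega
        rw [List.getLast_eq_get]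
        rw [← hbj]
        congr 1
        exact Fin.ext hjlen
    -- key: for b in the composite fiber of a₀ with t b = none, g.fa b is the last
    -- element of any f-fiber list of a₀, and G.t a₀ = none
    have key : ∀ (a₀ : G.A) (b : K.A), f.fa (g.fa b) = a₀ → K.t b = none →
        ∀ (L : List H.A) (hL : FiberList f a₀ L) (hneL : L ≠ []),
          g.fa b = L.getLast hneL ∧ G.t a₀ = none := by
      intro a₀ b hb hn L hL hneL
      obtain ⟨M, hM⟩ := hg.2.2.1 (g.fa b)
      have hbM : b ∈ M := (hM.1 b).2 rfl
      have hneM : M ≠ [] := List.ne_nil_of_mem hbM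
      have hblast := lastOf _ M hM b hbM hn hneM
      have hend : K.t (M.getLast hneM) = g.fv (H.t (g.fa b)) :=
        isPath_last M hM.2.2.1 hneM
      have htc : H.t (g.fa b) = none := hag.1 _ (by rw [← hend, ← hblast]; exact hn)
      -- position of g.fa b in L
      have hcL : g.fa b ∈ L := (hL.1 _).2 hb
      obtain ⟨⟨k, hk⟩, hck⟩ := List.mem_iff_get.mp hcL
      rcases Nat.lt_or_ge (k+1) L.length with h | h
      · exact absurd (hck ▸ haf.2 a₀ L hL k h) (by simp [htc])
      · have hklen : k = L.length - 1 := by omega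
        have hcl : g.fa b = L.getLast hneL := by
          rw [List.getLast_eq_get, ← hck]
          congr 1
          exact Fin.ext hklen
        have hendL : H.t (L.getLast hneL) = f.fv (G.t a₀) :=
          isPath_last L hL.2.2.1 hneL
        refine ⟨hcl, haf.1 _ ?_⟩
        rw [← hendL, ← hcl]; exact htc
    -- now the main argument
    have hlen := Nat.lt_of_succ_lt hi
    set b := l.get ⟨i, hlen⟩ with hbdef
    set b' := l.get ⟨i+1, hi⟩ with hb'def
    have hbl : b ∈ l := List.get_mem l _
    have hb'l : b' ∈ l := List.get_mem l _
    have hbfib : f.fa (g.fa b) = a := (hl.1 b).1 hbl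
    have hb'fib : f.fa (g.fa b') = a := (hl.1 b').1 hb'l
    have hdagcomm : ∀ x : K.A, f.fa (g.fa (K.dag x)) = G.dag (f.fa (g.fa x)) := by
      intro x; rw [hg.2.1, hf.2.1]
    have hdagb' : f.fa (g.fa (K.dag b')) = G.dag a := by rw [hdagcomm, hb'fib]
    have hndagb' : K.t (K.dag b') = none := by
      have := isPath_consec l hl.2.2.1 i hi
      rw [← this]; exact hnone
    -- fiber list for dag a
    obtain ⟨Ld, hLd⟩ := hf.2.2.1 (G.dag a)
    have hneLd : Ld ≠ [] := by
      intro h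
      have := (hLd.1 (g.fa (K.dag b'))).2 hdagb'
      rw [h] at this; exact absurd this List.not_mem_nil
    obtain ⟨hc1, hta⟩ := key (G.dag a) (K.dag b') hdagb' hndagb' Ld hLd hneLd
    -- head of l
    have hpos0 : (0:ℕ) < l.length := by omega
    set b0 := l.get ⟨0, hpos0⟩ with hb0def
    have hb0l : b0 ∈ l := List.get_mem l _
    have hb0fib : f.fa (g.fa b0) = a := (hl.1 b0).1 hb0l
    have hdagb0 : f.fa (g.fa (K.dag b0)) = G.dag a := by rw [hdagcomm, hb0fib]
    -- s = none
    have hhead : K.t (K.dag b0) = g.fv (f.fv (G.t (G.dag a))) :=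
      isPath_get_zero l hl.2.2.1 hpos0
    have hndagb0 : K.t (K.dag b0) = none := by
      rw [hhead, hta, hf.1, hg.1]
    obtain ⟨hc2, _⟩ := key (G.dag a) (K.dag b0) hdagb0 hndagb0 Ld hLd hneLd
    -- both dag b' and dag b0 are last of the g-fiber of c := Ld.getLast
    obtain ⟨M, hM⟩ := hg.2.2.1 (Ld.getLast hneLd)
    have hm1 : K.dag b' ∈ M := (hM.1 _).2 hc1
    have hm2 : K.dag b0 ∈ M := (hM.1 _).2 hc2
    have hneM : M ≠ [] := List.ne_nil_of_mem hm1
    have e1 := lastOf _ M hM (K.dag b') hm1 hndagb' hneM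
    have e2 := lastOf _ M hM (K.dag b0) hm2 hndagb0 hneM
    have : K.dag b' = K.dag b0 := by rw [e1, e2]
    have hb'b0 : b' = b0 := by
      have := congrArg K.dag this
      rwa [K.dag_dag, K.dag_dag] at this
    have : (⟨i+1, hi⟩ : Fin l.length) = ⟨0, hpos0⟩ := (hl.2.1.get_inj_iff).mp hb'b0
    simp at this

end CGraph

namespace CGraph

lemma iso_of_inert_active {G H : CGraph} (hG : G.Connected) (hH : H.Connected)
    (f : PreMap G H) (hf : IsGraphMap f) (hi : IsInert f) (ha : IsActive f) :
    IsGraphIso f := by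
  -- a vertex with no incident arcs contradicts connectivity (given some arc exists)
  have noArc : ∀ (v : G.V) (a : G.A), (∀ c : G.A, G.t c ≠ some v) → False := by
    intro v a hv
    have hS : ∀ x y, G.Touch x y →
        (x ∈ ({Sum.inl v} : Set (G.V ⊕ G.A)) ↔ y ∈ ({Sum.inl v} : Set (G.V ⊕ G.A))) := by
      intro x y hxy
      cases hxy with
      | dag a' => simp
      | incid a' v' h =>
        refine iff_of_false (by simp) ?_
        intro hy
        simp only [Set.mem_singleton_iff, Sum.inl.injEq] at hy
        exact hv a' (hy ▸ h)
    have hcl := eqvGen_closed _ hS (Sum.inl v) (Sum.inr a) (hG.2 _ _)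
    have : Sum.inr a ∈ ({Sum.inl v} : Set (G.V ⊕ G.A)) := hcl.mp rfl
    simp at this
  -- every fiber of f is nonempty
  have fibNE : ∀ a : G.A, ∃ b : H.A, f.fa b = a := by
    intro a
    by_contra hno
    push_neg at hno
    have hta : G.t a = none := ha.1 _ (hi.2 a hno)
    have hnod : ∀ b, f.fa b ≠ G.dag a := by
      intro b hb
      exact hno (H.dag b) (by rw [hf.2.1, hb, G.dag_dag])
    have htda : G.t (G.dag a) = none := ha.1 _ (hi.2 _ hnod)
    set S : Set (G.V ⊕ G.A) := {Sum.inr a, Sum.inr (G.dag a)} with hSdef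
    have hS : ∀ x y, G.Touch x y → (x ∈ S ↔ y ∈ S) := by
      intro x y hxy
      cases hxy with
      | dag a' =>
        simp only [hSdef, Set.mem_insert_iff, Set.mem_singleton_iff, Sum.inr.injEq]
        constructor
        · rintro (h | h)
          · right; rw [h]
          · left; rw [h, G.dag_dag]
        · rintro (h | h)
          · right; rw [← G.dag_dag a', h]
          · left
            have := congrArg G.dag h
            rwa [G.dag_dag, G.dag_dag] at this
      | incid a' v' h =>
        refine iff_of_false ?_ (by simp [hSdef])
        intro hx
        simp only [hSdef, Set.mem_insert_iff, Set.mem_singleton_iff, Sum.inr.injEq] at hx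
        rcases hx with hx | hx
        · rw [hx, hta] at h; exact Option.some_ne_none _ h.symm
        · rw [hx, htda] at h; exact Option.some_ne_none _ h.symm
    obtain ⟨x⟩ := hH.1
    cases x with
    | inl w =>
      obtain ⟨v, hv, -⟩ := hi.1 w
      have hcl := eqvGen_closed S hS (Sum.inl v) (Sum.inr a) (hG.2 _ _)
      have : Sum.inl v ∈ S := hcl.mpr (by simp [hSdef])
      simp [hSdef] at this
    | inr b =>
      have hcl := eqvGen_closed S hS (Sum.inr (f.fa b)) (Sum.inr a) (hG.2 _ _)
      have hmem : Sum.inr (f.fa b) ∈ S := hcl.mpr (by simp [hSdef])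
      simp only [hSdef, Set.mem_insert_iff, Set.mem_singleton_iff, Sum.inr.injEq] at hmem
      rcases hmem with h | h
      · exact hno b h
      · exact hnod b h
  -- every fiber list of f is a singleton
  have fibLen1 : ∀ (a : G.A) (l : List H.A), FiberList f a l → ∃ b, l = [b] := by
    intro a l hl
    obtain ⟨b, hb⟩ := fibNE a
    have hbl : b ∈ l := (hl.1 b).2 hb
    by_cases hlen : 2 ≤ l.length
    · exfalso
      have h01 : (0:ℕ) + 1 < l.length := by omega
      have hpos0 : 0 < l.length := by omega
      have hpos1 : 1 < l.length := by omega
      set b1 := l.get ⟨0, hpos0⟩ with hb1def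
      set b2 := l.get ⟨1, hpos1⟩ with hb2def
      have hw1ne : H.t b1 ≠ none := ha.2 a l hl 0 h01
      obtain ⟨w1, hw1⟩ := Option.ne_none_iff_exists'.mp hw1ne
      have hbiv : H.Bivalent w1 := by
        rcases hl.2.2.2 0 h01 with h | ⟨v, hv, hbv⟩
        · exact absurd h hw1ne
        · have : v = w1 := by
            rw [hw1] at hv; exact (Option.some.inj hv).symm
          exact this ▸ hbv
      have hconsec := isPath_consec l hl.2.2.1 0 h01
      have htd2 : H.t (H.dag b2) = some w1 := by
        rw [← hconsec]; exact hw1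
      have hfab1 : f.fa b1 = a := (hl.1 _).1 (List.get_mem _ _)
      have hfab2 : f.fa b2 = a := (hl.1 _).1 (List.get_mem _ _)
      have hne12 : b1 ≠ H.dag b2 := by
        intro h
        have h2 : f.fa (H.dag b2) = G.dag a := by rw [hf.2.1, hfab2]
        rw [← h, hfab1] at h2
        exact G.dag_ne a h2.symm
      have hclass : ∀ c : H.A, H.t c = some w1 → c = b1 ∨ c = H.dag b2 := by
        intro c hc
        have h2 := card2_cases (α := {c : H.A // H.t c = some w1}) hbiv
          (x := ⟨b1, hw1⟩) (y := ⟨H.dag b2, htd2⟩)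
          (by simpa [Subtype.ext_iff] using hne12) ⟨c, hc⟩
        rcases h2 with h | h
        · exact Or.inl (congrArg Subtype.val h)
        · exact Or.inr (congrArg Subtype.val h)
      obtain ⟨v, hv, -⟩ := hi.1 w1
      have hnoarc : ∀ c : G.A, G.t c ≠ some v := by
        intro c hc
        obtain ⟨m, hm⟩ := hf.2.2.1 c
        obtain ⟨bb, hbb⟩ := fibNE c
        have hbbm : bb ∈ m := (hm.1 bb).2 hbb
        have hnem : m ≠ [] := List.ne_nil_of_mem hbbm
        have hlastm : H.t (m.getLast hnem) = f.fv (G.t c) := isPath_last m hm.2.2.1 hnem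
        have hlw1 : H.t (m.getLast hnem) = some w1 := by rw [hlastm, hc, hv]
        have hfam : f.fa (m.getLast hnem) = c := (hm.1 _).1 (List.getLast_mem hnem)
        rcases hclass _ hlw1 with h | h
        · -- last of fiber(c) is b1, so c = a
          have hca : c = a := by rw [← hfam, h, hfab1]
          have hnel : l ≠ [] := List.ne_nil_of_mem hbl
          have hlastl : H.t (l.getLast hnel) = f.fv (G.t a) := isPath_last l hl.2.2.1 hnel
          have hlw : H.t (l.getLast hnel) = some w1 := by rw [hlastl, ← hca, hc, hv]
          rcases hclass _ hlw with h2 | h2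
          · have h3 : l.get ⟨l.length - 1, by omega⟩ = l.get ⟨0, hpos0⟩ := by
              rw [← List.getLast_eq_get]; exact h2
            have h4 := (hl.2.1.get_inj_iff).mp h3
            have h5 : l.length - 1 = 0 := congrArg Fin.val h4
            omega
          · have h3 : f.fa (l.getLast hnel) = a := (hl.1 _).1 (List.getLast_mem hnel)
            rw [h2, hf.2.1, hfab2] at h3
            exact G.dag_ne a h3
        · -- last of fiber(c) is dag b2, so c = dag a
          have hca : c = G.dag a := by rw [← hfam, h, hf.2.1, hfab2]
          have hstart : H.t (H.dag b1) = f.fv (G.t (G.dag a)) :=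
            isPath_get_zero l hl.2.2.1 hpos0
          have hsw : H.t (H.dag b1) = some w1 := by rw [hstart, ← hca, hc, hv]
          rcases hclass _ hsw with h2 | h2
          · exact H.dag_ne b1 h2
          · have h3 : b1 = b2 := by
              have := congrArg H.dag h2
              rwa [H.dag_dag, H.dag_dag] at this
            have h4 := (hl.2.1.get_inj_iff).mp h3
            have h5 : (0:ℕ) = 1 := congrArg Fin.val h4
            omega
      exact noArc v a hnoarc
    · push_neg at hlen
      cases l with
      | nil => exact absurd hbl List.not_mem_nil
      | cons x xs =>
        cases xs with
        | nil => exact ⟨x, rfl⟩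
        | cons y ys => simp at hlen
  have fibUnique : ∀ (a : G.A) (b b' : H.A), f.fa b = a → f.fa b' = a → b = b' := by
    intro a b b' hb hb'
    obtain ⟨l, hl⟩ := hf.2.2.1 a
    obtain ⟨x, rfl⟩ := fibLen1 a l hl
    have h1 : b ∈ [x] := (hl.1 b).2 hb
    have h2 : b' ∈ [x] := (hl.1 b').2 hb'
    simp at h1 h2
    rw [h1, h2]
  -- key endpoint relation
  have htkey : ∀ b : H.A, H.t b = f.fv (G.t (f.fa b)) := by
    intro b
    obtain ⟨l, hl⟩ := hf.2.2.1 (f.fa b)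
    obtain ⟨x, rfl⟩ := fibLen1 _ l hl
    have hbx : b = x := by
      have : b ∈ [x] := (hl.1 b).2 rfl
      simpa using this
    subst hbx
    have := hl.2.2.1.2
    simpa [IsPath] using this
  -- inverse vertex map
  have hex : ∀ w : H.V, ∃ v, f.fv (some v) = some w ∧
      ∀ v', f.fv (some v') = some w → v' = v := by
    intro w
    obtain ⟨v, h1, h2⟩ := hi.1 w
    exact ⟨v, h1, fun v' h => h2 v' h⟩
  choose ψ hψ1 hψ2 using hex
  choose σ hσ using fibNE
  set ginv : PreMap H G := ⟨fun x => Option.map ψ x, σ⟩ with hginv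
  have gid1 : ∀ x, Option.map ψ (f.fv x) = x := by
    intro x
    cases x with
    | none => rw [hf.1]; rfl
    | some v =>
      have hne : f.fv (some v) ≠ none := fun h => Option.some_ne_none _ (ha.1 _ h)
      obtain ⟨w, hw⟩ := Option.ne_none_iff_exists'.mp hne
      rw [hw]
      simp [← hψ2 w v hw]
  have gid2 : ∀ x, f.fv (Option.map ψ x) = x := by
    intro x
    cases x with
    | none => exact hf.1
    | some w => exact hψ1 w
  have gfa1 : ∀ b, σ (f.fa b) = b := fun b => fibUnique (f.fa b) _ b (hσ _) rfl
  have hσdag : ∀ a, σ (G.dag a) = H.dag (σ a) := by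
    intro a
    exact fibUnique (G.dag a) _ _ (hσ _) (by rw [hf.2.1, hσ])
  refine ⟨hf, ginv, ?_, ?_, ?_⟩
  · -- ginv is a graph map
    refine ⟨rfl, ?_, ?_, ?_, ?_⟩
    · intro a
      exact hσdag a
    · intro b
      refine ⟨[f.fa b], ?_, by simp, ?_, ?_⟩
      · intro c
        simp only [List.mem_singleton]
        constructor
        · intro h
          rw [h]; exact gfa1 b
        · intro h
          rw [← hσ c]; exact congrArg f.fa h
      · -- IsPath G [f.fa b] (ginv.fv (H.t (H.dag b))) (ginv.fv (H.t b))
        refine ⟨?_, ?_⟩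
        · show G.t (G.dag (f.fa b)) = Option.map ψ (H.t (H.dag b))
          rw [htkey (H.dag b), gid1, hf.2.1]
        · show G.IsPath [] (G.t (f.fa b)) (Option.map ψ (H.t b))
          show G.t (f.fa b) = Option.map ψ (H.t b)
          rw [htkey b, gid1]
      · intro i h
        simp at h
    · intro w w' heq hne
      have : (some w : Option H.V) = some w' := by
        rw [← gid2 (some w), ← gid2 (some w')]
        exact congrArg f.fv heq
      have hw : w = w' := Option.some.inj this
      subst hw
      exact ⟨[], by simp, rfl⟩
    · intro v hv'
      exfalso
      have hne : f.fv (some v) ≠ none := fun h => Option.some_ne_none _ (ha.1 _ h)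
      obtain ⟨w, hw⟩ := Option.ne_none_iff_exists'.mp hne
      have : ginv.fv (some w) = some v := by
        show Option.map ψ (some w) = some v
        rw [← hw, gid1]
      exact hv' w this
  · -- f.comp ginv = PreMap.id G
    show PreMap.mk (ginv.fv ∘ f.fv) (f.fa ∘ ginv.fa) = PreMap.mk (fun x => x) (fun a => a)
    congr 1
    · funext x
      exact gid1 x
    · funext a
      exact hσ a
  · -- ginv.comp f = PreMap.id H
    show PreMap.mk (f.fv ∘ ginv.fv) (ginv.fa ∘ f.fa) = PreMap.mk (fun x => x) (fun a => a)
    congr 1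
    · funext x
      exact gid2 x
    · funext b
      exact gfa1 b

end CGraph

/-!
STATEMENT 12: Inert combinatorial graph maps are closed under composition, active
combinatorial graph maps are closed under composition, and a combinatorial graph map
that is both inert and active is an isomorphism of graphs.
-/

open CGraph in
theorem inert_active_closure_and_iso :
    (∀ (G H K : CGraph), G.Connected → H.Connected → K.Connected →
      ∀ (f : PreMap G H) (g : PreMap H K), IsGraphMap f → IsGraphMap g →
        IsInert f → IsInert g → IsInert (f.comp g)) ∧
    (∀ (G H K : CGraph), G.Connected → H.Connected → K.Connected →
      ∀ (f : PreMap G H) (g : PreMap H K), IsGraphMap f → IsGraphMap g →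
        IsActive f → IsActive g → IsActive (f.comp g)) ∧
    (∀ (G H : CGraph), G.Connected → H.Connected →
      ∀ f : PreMap G H, IsGraphMap f → IsInert f → IsActive f → IsGraphIso f) := by
  refine ⟨?_, ?_, ?_⟩
  · intro G H K _ _ _ f g hf hg hif hig
    exact CGraph.inert_comp f g hf hg hif hig
  · intro G H K _ _ _ f g hf hg haf hag
    exact CGraph.active_comp f g hf hg haf hag
  · intro G H hG hH f hf hi ha
    exact CGraph.iso_of_inert_active hG hH f hf hi ha
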